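/- Let S₁,…,S_n, S_{n+1} be exchangeable real-valued random variables with continuous joint distribution (no ties almost surely). For α ∈ (0,1), let q_{α/2} and q_{1−α/2} denote the empirical (α/2)- and (1−α/2)-quantiles of S₁,…,S_n. Then P(q_{α/2} ≤ S_{n+1} ≤ q_{1−α/2}) ≥ 1 − α − 2/(n+1). -/

import Mathlib

open MeasureTheory

/-! ### Auxiliary list lemmas -/

lemma countP_ofFn' {α : Type*} {n : ℕ} (f : Fin n → α) (p : α → Bool) :
    (List.ofFn f).countP p = ∑ j : Fin n, if p (f j) then 1 else 0 := by
  induction n with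
  | zero => simp
  | succ m ih =>
    rw [List.ofFn_succ, List.countP_cons, Fin.sum_univ_succ, ih]
    by_cases h : p (f 0) <;> simp [h] <;> omega

lemma sorted_getElem_le' {l : List ℝ} (hs : l.Pairwise (· ≤ ·)) {i j : ℕ}
    (hij : i ≤ j) (hj : j < l.length) : l[i]'(lt_of_le_of_lt hij hj) ≤ l[j] :=
  hs.rel_get_of_le (by simpa using hij)

lemma countP_le_of_lt_getD' {l : List ℝ} (hs : l.Pairwise (· ≤ ·)) {k : ℕ} (hk1 : 1 ≤ k)
    (hk2 : k ≤ l.length) {x : ℝ} (hx : x < l.getD (k-1) 0) :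
    l.countP (fun y => decide (y ≤ x)) ≤ k - 1 := by
  have hlt : k - 1 < l.length := by omega
  rw [List.getD_eq_getElem l 0 hlt] at hx
  have h2 : (l.drop (k-1)).countP (fun y => decide (y ≤ x)) = 0 := by
    rw [List.countP_eq_zero]
    intro a ha
    simp only [decide_eq_true_eq]
    obtain ⟨j, hj, rfl⟩ := List.getElem_of_mem ha
    have hjl : k - 1 + j < l.length := by
      rw [List.length_drop] at hj; omega
    rw [List.getElem_drop]
    have h1 : l[k-1] ≤ l[k-1+j] := sorted_getElem_le' hs (by omega) hjl
    push_neg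
    exact lt_of_lt_of_le hx h1
  calc l.countP (fun y => decide (y ≤ x))
      = (l.take (k-1)).countP _ + (l.drop (k-1)).countP _ := by
        rw [← List.countP_append, List.take_append_drop]
    _ ≤ (l.take (k-1)).length + 0 := by
        rw [h2]; exact Nat.add_le_add List.countP_le_length le_rfl
    _ ≤ k - 1 := by rw [List.length_take]; omega

lemma le_countP_of_getD_lt' {l : List ℝ} (hs : l.Pairwise (· ≤ ·)) {m : ℕ} (hm1 : 1 ≤ m)
    (hm2 : m ≤ l.length) {x : ℝ} (hx : l.getD (m-1) 0 < x) :
    m ≤ l.countP (fun y => decide (y ≤ x)) := by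
  have hlt : m - 1 < l.length := by omega
  rw [List.getD_eq_getElem l 0 hlt] at hx
  have h1 : (l.take m).countP (fun y => decide (y ≤ x)) = (l.take m).length := by
    rw [List.countP_eq_length]
    intro a ha
    simp only [decide_eq_true_eq]
    obtain ⟨j, hj, rfl⟩ := List.getElem_of_mem ha
    rw [List.getElem_take]
    have hjl : j < m := by rw [List.length_take] at hj; omega
    have h2 : l[j]'(by omega) ≤ l[m-1] := sorted_getElem_le' hs (by omega) hlt
    exact le_of_lt (lt_of_le_of_lt h2 hx)
  calc m = (l.take m).length := by rw [List.length_take]; omega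
    _ = (l.take m).countP _ := h1.symm
    _ ≤ l.countP _ := by
        conv_rhs => rw [← List.take_append_drop m l]
        rw [List.countP_append]; omega

lemma mergeSort_sorted_real' (l : List ℝ) : (l.mergeSort (· ≤ ·)).Pairwise (· ≤ ·) := by
  have h := List.pairwise_mergeSort (le := fun a b : ℝ => decide (a ≤ b))
    (by intro a b c; simp; exact le_trans) (by intro a b; simp; exact le_total a b) l
  refine List.Pairwise.imp ?_ h
  intro a b hb; simpa using hb

/-! ### Rank machinery -/

noncomputable def rankF' {N : ℕ} (v : Fin N → ℝ) (i : Fin N) : ℕ :=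
  (Finset.univ.filter (fun j => v j ≤ v i)).card

lemma one_le_rankF' {N : ℕ} (v : Fin N → ℝ) (i : Fin N) : 1 ≤ rankF' v i :=
  Finset.card_pos.mpr ⟨i, by simp⟩

lemma rankF'_le {N : ℕ} (v : Fin N → ℝ) (i : Fin N) : rankF' v i ≤ N := by
  classical
  simpa [rankF'] using (Finset.card_filter_le Finset.univ (fun j => v j ≤ v i))

lemma rankF'_comp {N : ℕ} (v : Fin N → ℝ) (σ : Equiv.Perm (Fin N)) (i : Fin N) :
    rankF' (v ∘ σ) i = rankF' v (σ i) := by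
  unfold rankF'
  apply Finset.card_bij' (fun j _ => σ j) (fun j _ => σ.symm j)
  · intro a ha; simpa using (by simpa using ha : v (σ a) ≤ v (σ i))
  · intro a ha; simp at ha ⊢; simpa using ha
  · intro a _; simp
  · intro a _; simp

lemma rankF'_lt_of_lt {N : ℕ} {v : Fin N → ℝ} {i j : Fin N} (h : v i < v j) :
    rankF' v i < rankF' v j := by
  apply Finset.card_lt_card
  constructor
  · intro a ha; simp at ha ⊢; exact le_trans ha (le_of_lt h)
  · intro hsub
    have := hsub (by simp : j ∈ Finset.univ.filter (fun k => v k ≤ v j))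
    simp at this
    exact absurd (lt_of_lt_of_le h this) (lt_irrefl _)

lemma rankF'_injective {N : ℕ} {v : Fin N → ℝ} (hv : Function.Injective v) :
    Function.Injective (rankF' v) := by
  intro i j hij
  by_contra hne
  rcases lt_trichotomy (v i) (v j) with h | h | h
  · exact absurd hij (Nat.ne_of_lt (rankF'_lt_of_lt h))
  · exact hne (hv h)
  · exact absurd hij.symm (Nat.ne_of_lt (rankF'_lt_of_lt h))

lemma rankF'_existsUnique {N : ℕ} {v : Fin N → ℝ} (hv : Function.Injective v)
    {r : ℕ} (hr1 : 1 ≤ r) (hr2 : r ≤ N) : ∃! i, rankF' v i = r := by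
  have hg : Function.Injective (fun i : Fin N => (⟨rankF' v i - 1, by
      have := rankF'_le v i; have := one_le_rankF' v i; omega⟩ : Fin N)) := by
    intro i j hij
    apply rankF'_injective hv
    have h1 := one_le_rankF' v i; have h2 := one_le_rankF' v j
    have := Fin.mk.injEq .. ▸ hij
    omega
  obtain ⟨i, hi⟩ := Finite.surjective_of_injective hg ⟨r - 1, by omega⟩
  have hval : rankF' v i - 1 = r - 1 := by simpa using congrArg Fin.val hi
  have h1 := one_le_rankF' v i
  have ha : rankF' v i = r := by omega
  exact ⟨i, ha, fun j hj => rankF'_injective hv (hj.trans ha.symm)⟩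

lemma measurable_rankF' {N : ℕ} (i : Fin N) :
    Measurable (fun v : Fin N → ℝ => rankF' v i) := by
  classical
  have : (fun v : Fin N → ℝ => rankF' v i)
      = fun v => ∑ j : Fin N, if v j ≤ v i then 1 else 0 := by
    funext v; exact Finset.card_filter _ _
  rw [this]
  exact Finset.measurable_sum _ fun j _ =>
    Measurable.ite (measurableSet_le (measurable_pi_apply j) (measurable_pi_apply i))
      measurable_const measurable_const

/-- Empirical `γ`-quantile of `s₁,…,s_n`: the `⌈γ n⌉`-th order statistic. -/
noncomputable def empQuantile {n : ℕ} (γ : ℝ) (s : Fin n → ℝ) : ℝ :=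
  ((List.ofFn s).mergeSort (· ≤ ·)).getD (⌈γ * n⌉.toNat - 1) 0

lemma rankF'_last_eq {n : ℕ} (v : Fin (n+1) → ℝ) :
    rankF' v (Fin.last n) =
      (List.ofFn (fun j : Fin n => v j.castSucc)).countP
        (fun y => decide (y ≤ v (Fin.last n))) + 1 := by
  rw [rankF', Finset.card_filter, Fin.sum_univ_castSucc, countP_ofFn']
  simp

lemma rank_le_of_lt_quantile' {n : ℕ} (v : Fin (n+1) → ℝ) {γ : ℝ} {k : ℕ}
    (hk : (⌈γ * n⌉).toNat = k) (hk1 : 1 ≤ k) (hk2 : k ≤ n)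
    (hlt : v (Fin.last n) < empQuantile γ (fun j : Fin n => v j.castSucc)) :
    rankF' v (Fin.last n) ≤ k := by
  have hperm : ((List.ofFn (fun j : Fin n => v j.castSucc)).mergeSort (· ≤ ·)).Perm
      (List.ofFn (fun j : Fin n => v j.castSucc)) := List.mergeSort_perm _ _
  have hcount := countP_le_of_lt_getD' (mergeSort_sorted_real'
      (List.ofFn (fun j : Fin n => v j.castSucc))) hk1
    (by rw [List.length_mergeSort, List.length_ofFn]; omega)
    (x := v (Fin.last n)) (by rw [empQuantile, hk] at hlt; exact hlt)
  rw [rankF'_last_eq, ← hperm.countP_eq]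
  omega

lemma rank_ge_of_quantile_lt' {n : ℕ} (v : Fin (n+1) → ℝ) {γ : ℝ} {m : ℕ}
    (hm : (⌈γ * n⌉).toNat = m) (hm1 : 1 ≤ m) (hm2 : m ≤ n)
    (hlt : empQuantile γ (fun j : Fin n => v j.castSucc) < v (Fin.last n)) :
    m + 1 ≤ rankF' v (Fin.last n) := by
  have hperm : ((List.ofFn (fun j : Fin n => v j.castSucc)).mergeSort (· ≤ ·)).Perm
      (List.ofFn (fun j : Fin n => v j.castSucc)) := List.mergeSort_perm _ _
  have hcount := le_countP_of_getD_lt' (mergeSort_sorted_real'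
      (List.ofFn (fun j : Fin n => v j.castSucc))) hm1
    (by rw [List.length_mergeSort, List.length_ofFn]; omega)
    (x := v (Fin.last n)) (by rw [empQuantile, hm] at hlt; exact hlt)
  rw [rankF'_last_eq, ← hperm.countP_eq]
  omega

theorem split_conformal_two_sided_coverage
    {Ω : Type*} [MeasurableSpace Ω] (μ : Measure Ω) [IsProbabilityMeasure μ]
    (n : ℕ) (hn : 0 < n) (S : Fin (n + 1) → Ω → ℝ)
    (hmeas : ∀ i, Measurable (S i))
    (hexch : ∀ σ : Equiv.Perm (Fin (n + 1)),
      Measure.map (fun ω => fun i => S (σ i) ω) μ =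
        Measure.map (fun ω => fun i => S i ω) μ)
    (hties : ∀ᵐ ω ∂μ, Function.Injective (fun i => S i ω))
    (α : ℝ) (hα : α ∈ Set.Ioo (0 : ℝ) 1) :
    1 - α - 2 / (n + 1) ≤
      (μ {ω | empQuantile (α / 2) (fun i : Fin n => S i.castSucc ω) ≤ S (Fin.last n) ω ∧
              S (Fin.last n) ω ≤
                empQuantile (1 - α / 2) (fun i : Fin n => S i.castSucc ω)}).toReal := by
  classical
  obtain ⟨hα0, hα1⟩ := hα
  set Φ : Ω → (Fin (n+1) → ℝ) := fun ω i => S i ω with hΦdef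
  have hΦ : Measurable Φ := by
    rw [hΦdef]; exact measurable_pi_lambda _ fun i => hmeas i
  -- events
  set A : Fin (n+1) → ℕ → Set Ω := fun i r => Φ ⁻¹' {v | rankF' v i = r} with hA
  have hAmeas : ∀ i r, MeasurableSet (A i r) := fun i r =>
    hΦ ((measurable_rankF' i) (measurableSet_singleton r))
  -- exchangeability: all coordinates have the same rank distribution
  have hkey : ∀ (σ : Equiv.Perm (Fin (n+1))) (i : Fin (n+1)) (r : ℕ), μ (A (σ i) r) = μ (A i r) := by
    intro σ i r
    have hB : MeasurableSet {v : Fin (n+1) → ℝ | rankF' v i = r} :=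
      (measurable_rankF' i) (measurableSet_singleton r)
    have hσmeas : Measurable (fun ω => fun j : Fin (n+1) => S (σ j) ω) :=
      measurable_pi_lambda _ fun j => (hmeas (σ j) : _)
    have h1 := congrArg (fun m : Measure (Fin (n+1) → ℝ) => m {v | rankF' v i = r}) (hexch σ)
    rw [Measure.map_apply hσmeas hB, Measure.map_apply hΦ hB] at h1
    have h2 : (fun ω => fun j : Fin (n+1) => S (σ j) ω) ⁻¹' {v | rankF' v i = r} = A (σ i) r := by
      ext ω
      simp only [Set.mem_preimage, Set.mem_setOf_eq, hA]
      constructor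
      · intro h; rw [← rankF'_comp (Φ ω) σ i]; exact h
      · intro h; rw [show (fun j : Fin (n+1) => S (σ j) ω) = (Φ ω) ∘ σ from rfl,
          rankF'_comp (Φ ω) σ i]; exact h
    rw [h2] at h1
    exact h1
  have hlast : ∀ i r, μ (A i r) = μ (A (Fin.last n) r) := by
    intro i r
    have := hkey (Equiv.swap i (Fin.last n)) (Fin.last n) r
    rwa [Equiv.swap_apply_right] at this
  -- sum of rank-event probabilities is 1
  have hsum : ∀ r : ℕ, 1 ≤ r → r ≤ n+1 → ∑ i : Fin (n+1), μ (A i r) = 1 := by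
    intro r hr1 hr2
    have heq : ∀ i, μ (A i r) = ∫⁻ ω, (A i r).indicator (fun _ => (1 : ENNReal)) ω ∂μ := by
      intro i
      exact (lintegral_indicator_one (hAmeas i r)).symm
    simp_rw [heq]
    rw [← lintegral_finset_sum _ fun i _ =>
      (measurable_const.indicator (hAmeas i r))]
    have hae : ∀ᵐ ω ∂μ,
        ∑ i : Fin (n+1), (A i r).indicator (fun _ => (1 : ENNReal)) ω = 1 := by
      filter_upwards [hties] with ω hω
      obtain ⟨i₀, hi₀, huniq⟩ := rankF'_existsUnique (v := Φ ω) hω hr1 hr2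
      rw [Finset.sum_eq_single_of_mem i₀ (Finset.mem_univ _)]
      · exact Set.indicator_of_mem (by simpa [hA] using hi₀) _
      · intro j _ hj
        apply Set.indicator_of_notMem
        simp only [hA, Set.mem_preimage, Set.mem_setOf_eq]
        intro hc
        exact hj (huniq j hc)
    rw [lintegral_congr_ae hae]
    simp
  -- individual probability
  have hNne : ((n+1 : ℕ) : ENNReal) ≠ 0 := by simp
  have hNnt : ((n+1 : ℕ) : ENNReal) ≠ ⊤ := by simp
  have hprob : ∀ r : ℕ, 1 ≤ r → r ≤ n+1 → μ (A (Fin.last n) r) = ((n+1 : ℕ) : ENNReal)⁻¹ := by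
    intro r hr1 hr2
    have h1 := hsum r hr1 hr2
    rw [Finset.sum_congr rfl (fun i _ => hlast i r), Finset.sum_const] at h1
    simp only [Finset.card_univ, Fintype.card_fin] at h1
    rw [nsmul_eq_mul] at h1
    calc μ (A (Fin.last n) r)
        = ((n+1 : ℕ) : ENNReal)⁻¹ * (((n+1 : ℕ) : ENNReal) * μ (A (Fin.last n) r)) := by
          rw [← mul_assoc, ENNReal.inv_mul_cancel hNne hNnt, one_mul]
      _ = ((n+1 : ℕ) : ENNReal)⁻¹ := by rw [h1, mul_one]
  -- quantile indices
  set k₁ : ℕ := (⌈(α / 2) * n⌉).toNat with hk₁def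
  set k₂ : ℕ := (⌈(1 - α / 2) * n⌉).toNat with hk₂def
  have hk₁pos : 1 ≤ k₁ := by
    have : (0 : ℤ) < ⌈(α / 2) * n⌉ := Int.ceil_pos.mpr (by positivity)
    omega
  have hk₁le : k₁ ≤ n := by
    have h1 : ⌈(α / 2) * n⌉ ≤ (n : ℤ) := Int.ceil_le.mpr (by push_cast; nlinarith)
    omega
  have hk₂pos : 1 ≤ k₂ := by
    have : (0 : ℤ) < ⌈(1 - α / 2) * n⌉ := Int.ceil_pos.mpr (by
      have : (0:ℝ) < n := by exact_mod_cast hn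
      nlinarith)
    omega
  have hk₂le : k₂ ≤ n := by
    have h1 : ⌈(1 - α / 2) * n⌉ ≤ (n : ℤ) := Int.ceil_le.mpr (by push_cast; nlinarith)
    omega
  -- bad event inclusion
  set G : Set Ω := {ω | empQuantile (α / 2) (fun i : Fin n => S i.castSucc ω) ≤ S (Fin.last n) ω ∧
              S (Fin.last n) ω ≤
                empQuantile (1 - α / 2) (fun i : Fin n => S i.castSucc ω)} with hG
  set F : Finset ℕ := Finset.Icc 1 k₁ ∪ Finset.Icc (k₂ + 1) (n+1) with hF
  have hincl : Gᶜ ⊆ ⋃ r ∈ F, A (Fin.last n) r := by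
    intro ω hω
    simp only [hG, Set.mem_compl_iff, Set.mem_setOf_eq, not_and_or, not_le] at hω
    have hmem : rankF' (Φ ω) (Fin.last n) ∈ F := by
      rcases hω with h | h
      · apply Finset.mem_union_left
        rw [Finset.mem_Icc]
        refine ⟨one_le_rankF' _ _, ?_⟩
        exact rank_le_of_lt_quantile' (Φ ω) hk₁def.symm hk₁pos hk₁le (by exact h)
      · apply Finset.mem_union_right
        rw [Finset.mem_Icc]
        refine ⟨?_, rankF'_le _ _⟩
        exact rank_ge_of_quantile_lt' (Φ ω) hk₂def.symm hk₂pos hk₂le (by exact h)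
    exact Set.mem_biUnion hmem rfl
  -- bound on bad event
  have hFsub : ∀ r ∈ F, 1 ≤ r ∧ r ≤ n+1 := by
    intro r hr
    rw [hF, Finset.mem_union, Finset.mem_Icc, Finset.mem_Icc] at hr
    omega
  have hbad : μ Gᶜ ≤ ((k₁ + ((n+1) - k₂) : ℕ) : ENNReal) * ((n+1 : ℕ) : ENNReal)⁻¹ := by
    calc μ Gᶜ ≤ μ (⋃ r ∈ F, A (Fin.last n) r) := measure_mono hincl
      _ ≤ ∑ r ∈ F, μ (A (Fin.last n) r) := measure_biUnion_finset_le F _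
      _ = ∑ r ∈ F, ((n+1 : ℕ) : ENNReal)⁻¹ := Finset.sum_congr rfl fun r hr =>
          hprob r (hFsub r hr).1 (hFsub r hr).2
      _ = (F.card : ENNReal) * ((n+1 : ℕ) : ENNReal)⁻¹ := by
          rw [Finset.sum_const, nsmul_eq_mul]
      _ ≤ ((k₁ + ((n+1) - k₂) : ℕ) : ENNReal) * ((n+1 : ℕ) : ENNReal)⁻¹ := by
          apply mul_le_mul' _ le_rfl
          exact Nat.cast_le.mpr (by
            calc F.card ≤ (Finset.Icc 1 k₁).card + (Finset.Icc (k₂+1) (n+1)).card :=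
                  Finset.card_union_le _ _
              _ = k₁ + ((n+1) - k₂) := by rw [Nat.card_Icc, Nat.card_Icc]; omega)
  -- convert to real
  have hGfin : μ G ≠ ⊤ := (measure_lt_top μ G).ne
  have hGcfin : μ Gᶜ ≠ ⊤ := (measure_lt_top μ Gᶜ).ne
  have hone : (1 : ENNReal) ≤ μ G + μ Gᶜ := by
    calc (1 : ENNReal) = μ Set.univ := (measure_univ (μ := μ)).symm
      _ = μ (G ∪ Gᶜ) := by rw [Set.union_compl_self]
      _ ≤ μ G + μ Gᶜ := measure_union_le _ _
  have honeR : (1 : ℝ) ≤ (μ G).toReal + (μ Gᶜ).toReal := by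
    have := ENNReal.toReal_mono (by finiteness) hone
    rwa [ENNReal.toReal_one, ENNReal.toReal_add hGfin hGcfin] at this
  have hNposR : (0 : ℝ) < (n : ℝ) + 1 := by positivity
  have hbadR : (μ Gᶜ).toReal ≤ ((k₁ + ((n+1) - k₂) : ℕ) : ℝ) * ((n : ℝ) + 1)⁻¹ := by
    have h1 := ENNReal.toReal_mono (by finiteness) hbad
    rw [ENNReal.toReal_mul, ENNReal.toReal_inv] at h1
    have e1 : (((k₁ + ((n+1) - k₂) : ℕ) : ENNReal)).toReal = ((k₁ + ((n+1) - k₂) : ℕ) : ℝ) := rfl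
    have e2 : (((n+1 : ℕ) : ENNReal)).toReal = ((n : ℝ) + 1) := by
      rw [show (((n+1 : ℕ) : ENNReal)).toReal = ((n+1 : ℕ) : ℝ) from rfl]; push_cast; ring
    rwa [e1, e2] at h1
  -- real arithmetic on the indices
  have hk₁R : (k₁ : ℝ) ≤ (α / 2) * n + 1 := by
    have h1 : ((⌈(α / 2) * n⌉ : ℤ) : ℝ) < (α / 2) * n + 1 := Int.ceil_lt_add_one _
    have h3 : (0:ℤ) ≤ ⌈(α / 2) * n⌉ := by positivity
    have h2 : (k₁ : ℝ) = ((⌈(α / 2) * n⌉ : ℤ) : ℝ) := by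
      rw [hk₁def]; exact_mod_cast congrArg (fun z : ℤ => (z : ℝ)) (Int.toNat_of_nonneg h3)
    linarith
  have hk₂R : (1 - α / 2) * n ≤ (k₂ : ℝ) := by
    have h1 : (1 - α / 2) * n ≤ ((⌈(1 - α / 2) * n⌉ : ℤ) : ℝ) := Int.le_ceil _
    have h3 : (0:ℤ) ≤ ⌈(1 - α / 2) * n⌉ := by
      have hn' : (0:ℝ) < n := by exact_mod_cast hn
      have := Int.ceil_pos.mpr (show (0:ℝ) < (1 - α / 2) * n by nlinarith)
      omega
    have h2 : (k₂ : ℝ) = ((⌈(1 - α / 2) * n⌉ : ℤ) : ℝ) := by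
      rw [hk₂def]; exact_mod_cast congrArg (fun z : ℤ => (z : ℝ)) (Int.toNat_of_nonneg h3)
    linarith
  have hcast : ((k₁ + ((n+1) - k₂) : ℕ) : ℝ) = (k₁ : ℝ) + ((n : ℝ) + 1) - (k₂ : ℝ) := by
    have h4 : k₂ ≤ n+1 := by omega
    push_cast [Nat.cast_sub h4]
    ring
  have hfinal : ((k₁ + ((n+1) - k₂) : ℕ) : ℝ) * ((n : ℝ) + 1)⁻¹ ≤ α + 2 / ((n : ℝ) + 1) := by
    rw [hcast, ← div_eq_mul_inv, div_le_iff₀ hNposR]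
    have h2N : (2 / ((n : ℝ) + 1)) * ((n : ℝ) + 1) = 2 := by field_simp
    rw [add_mul, h2N]
    nlinarith [hk₁R, hk₂R, mul_pos hα0 hNposR]
  linarith [honeR, hbadR, hfinal]
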